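/- Let T₂ be an X-tree, χ a character, A a state with X_A = χ⁻¹(A), and e an edge of T₂ generating a split P|Q with X_A ⊆ P. Let χ' be obtained from χ by relabeling A := B for some state B with χ⁻¹(B) ⊆ Q. For any extension ω' of χ' to T₂, the modification ω obtained by reassigning state A to every vertex in the P-side component of T₂ − e that ω' colors B yields an extension of χ with at most one more mutation edge than ω'. Hence ℓ(T₂,χ) ≤ ℓ(T₂,χ') + 1. -/

import Mathlib

open SimpleGraph

namespace PhyloMP

/-- The set of mutation edges of a vertex coloring `ω` of a graph:
edges whose two endpoints receive different states. -/
def mutationEdges {V C : Type} (g : SimpleGraph V) (ω : V → C) : Set (Sym2 V) :=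
  {e | e ∈ g.edgeSet ∧ ∃ u v : V, e = s(u, v) ∧ ω u ≠ ω v}

/-- An unrooted binary phylogenetic tree on taxon set `X`, with vertex set `V`:
a tree whose degree-1 vertices (leaves) are bijectively labeled by `X` and whose
other vertices have degree 3. -/
structure XTree (X V : Type) [Fintype V] where
  g : SimpleGraph V
  isTree : g.IsTree
  leaf : X → V
  leafInj : Function.Injective leaf
  leafDeg : ∀ x, (g.neighborSet (leaf x)).ncard = 1
  leavesOnly : ∀ v, (g.neighborSet v).ncard = 1 → ∃ x, leaf x = v
  internalDeg : ∀ v, (g.neighborSet v).ncard ≠ 1 → (g.neighborSet v).ncard = 3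

variable {X V C : Type} [Fintype V]

/-- `ω` extends the character `χ` to all vertices of `T`. -/
def IsExtension (T : XTree X V) (χ : X → C) (ω : V → C) : Prop :=
  ∀ x, ω (T.leaf x) = χ x

/-- The parsimony score `ℓ(T,χ)`: the minimum number of mutation edges over
all extensions of `χ` to `T`. -/
noncomputable def score (T : XTree X V) (χ : X → C) : ℕ :=
  sInf {n | ∃ ω : V → C, IsExtension T χ ω ∧ (mutationEdges T.g ω).ncard = n}

/-- A most parsimonious extension. -/
def IsMPExtension (T : XTree X V) (χ : X → C) (ω : V → C) : Prop :=
  IsExtension T χ ω ∧ (mutationEdges T.g ω).ncard = score T χ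

/-- `|χ|`: the number of states used by the character `χ`. -/
noncomputable def nStates {X C : Type} (χ : X → C) : ℕ := (Set.range χ).ncard

/-- `χ` is convex on `T`: its parsimony score equals its number of states minus one. -/
def IsConvex (T : XTree X V) (χ : X → C) : Prop := score T χ = nStates χ - 1

/-- The maximum parsimony distance between two `X`-trees. -/
noncomputable def dMP {V₁ V₂ : Type} [Fintype V₁] [Fintype V₂]
    (T₁ : XTree X V₁) (T₂ : XTree X V₂) : ℕ :=
  sSup {d | ∃ χ : X → ℕ, Nat.dist (score T₁ χ) (score T₂ χ) = d}

/-- A character achieving the maximum parsimony distance. -/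
def IsOptimal {V₁ V₂ : Type} [Fintype V₁] [Fintype V₂]
    (T₁ : XTree X V₁) (T₂ : XTree X V₂) (χ : X → C) : Prop :=
  Nat.dist (score T₁ χ) (score T₂ χ) = dMP T₁ T₂

/-- The forest induced by an extension `ω`: delete all mutation edges of `ω` from `T`. -/
noncomputable def forest (T : XTree X V) (ω : V → C) : SimpleGraph V :=
  T.g.deleteEdges (mutationEdges T.g ω)

/-- A connected component `c` of the forest `F` carries the state `s`. -/
def carries {V C : Type} (F : SimpleGraph V) (ω : V → C) (c : F.ConnectedComponent) (s : C) : Prop :=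
  ∃ v, F.connectedComponentMk v = c ∧ ω v = s

/-- The number of components of `F` carrying the state `s`. A state is *unique*
if this is 1 and *repeating* if this is at least 2. -/
noncomputable def stateMultiplicity {V C : Type} (F : SimpleGraph V) (ω : V → C) (s : C) : ℕ :=
  {c : F.ConnectedComponent | carries F ω c s}.ncard

/-- Relabel the state `A` as `B` in the character `χ`. -/
def relabel {X C : Type} [DecidableEq C] (χ : X → C) (A B : C) : X → C :=
  fun x => if χ x = A then B else χ x

/-- Two states `A`, `B` are adjacent (with respect to the coloring `ω`) if some edge of the
graph joins a vertex colored `A` to a vertex colored `B`; for distinct states, this edge is a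
mutation edge joining the corresponding components of the induced forest. -/
def statesAdjacent {V C : Type} (g : SimpleGraph V) (ω : V → C) (A B : C) : Prop :=
  ∃ u v, g.Adj u v ∧ ω u = A ∧ ω v = B

end PhyloMP

open PhyloMP in
open scoped Classical in
lemma stmt_16_aux {X V C : Type} [Fintype V] [DecidableEq C] (T₂ : XTree X V) (χ : X → C)
    (A B : C) (hAB : A ≠ B) (u v : V) (huv : T₂.g.Adj u v)
    (hA : ∀ x, χ x = A → (T₂.g.deleteEdges {s(u, v)}).Reachable (T₂.leaf x) u)
    (hB : ∀ x, χ x = B → (T₂.g.deleteEdges {s(u, v)}).Reachable (T₂.leaf x) v)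
    (ω' : V → C) (hω' : IsExtension T₂ (relabel χ A B) ω') :
    IsExtension T₂ χ
      (fun w => if (T₂.g.deleteEdges {s(u, v)}).Reachable w u ∧ ω' w = B then A else ω' w) ∧
    (mutationEdges T₂.g
        (fun w => if (T₂.g.deleteEdges {s(u, v)}).Reachable w u ∧ ω' w = B then A else ω' w)).ncard
      ≤ (mutationEdges T₂.g ω').ncard + 1 := by
  set g' := T₂.g.deleteEdges {s(u, v)} with hg'
  set ω : V → C := fun w => if g'.Reachable w u ∧ ω' w = B then A else ω' w with hω
  have hbridge : ¬ g'.Reachable u v := by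
    have := (isAcyclic_iff_forall_adj_isBridge.mp T₂.isTree.IsAcyclic) huv
    exact this
  constructor
  · intro x
    have hx := hω' x
    by_cases hxa : χ x = A
    · have : ω' (T₂.leaf x) = B := by rwa [relabel, if_pos hxa] at hx
      simp only [hω]
      rw [if_pos ⟨hA x hxa, this⟩, hxa]
    · have hxv : ω' (T₂.leaf x) = χ x := by rwa [relabel, if_neg hxa] at hx
      by_cases hxb : χ x = B
      · have hnr : ¬ g'.Reachable (T₂.leaf x) u := by
          intro hr
          exact hbridge ((hr.symm).trans (hB x hxb))
        simp only [hω]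
        rw [if_neg (fun h => hnr h.1), hxv]
      · simp only [hω]
        rw [if_neg (fun h => hxb (hxv ▸ h.2)), hxv]
  · have hsub : mutationEdges T₂.g ω ⊆ mutationEdges T₂.g ω' ∪ {s(u, v)} := by
      rintro e ⟨he, a, b, rfl, hab⟩
      by_cases heq : s(a, b) = s(u, v)
      · exact Or.inr heq
      · left
        refine ⟨he, a, b, rfl, ?_⟩
        intro hcon
        apply hab
        have hadj : T₂.g.Adj a b := he
        have hadj' : g'.Adj a b := by
          rw [hg', SimpleGraph.deleteEdges_adj]
          exact ⟨hadj, by simpa using heq⟩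
        have hRiff : g'.Reachable a u ↔ g'.Reachable b u :=
          ⟨fun h => (hadj'.reachable.symm).trans h, fun h => hadj'.reachable.trans h⟩
        simp only [hω]
        by_cases hra : g'.Reachable a u
        · by_cases hb' : ω' a = B
          · rw [if_pos ⟨hra, hb'⟩, if_pos ⟨hRiff.mp hra, hcon ▸ hb'⟩]
          · rw [if_neg (fun h => hb' h.2), if_neg (fun h => hb' (hcon ▸ h.2))]
            exact hcon
        · rw [if_neg (fun h => hra h.1), if_neg (fun h => hra (hRiff.mpr h.1))]
          exact hcon
    calc (mutationEdges T₂.g ω).ncard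
        ≤ (mutationEdges T₂.g ω' ∪ {s(u, v)}).ncard :=
          Set.ncard_le_ncard hsub (Set.toFinite _)
      _ ≤ (mutationEdges T₂.g ω').ncard + ({s(u, v)} : Set (Sym2 V)).ncard :=
          Set.ncard_union_le _ _
      _ = (mutationEdges T₂.g ω').ncard + 1 := by rw [Set.ncard_singleton]

open PhyloMP in
open scoped Classical in
/-- Given an edge `{u,v}` of `T₂` splitting the `A`-taxa from the `B`-taxa
and an extension `ω'` of the relabeled character `χ' = (A := B)`, reassigning state `A`
to every vertex on the `u`-side that `ω'` colors `B` yields an extension of `χ` with at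
most one more mutation edge; hence `ℓ(T₂,χ) ≤ ℓ(T₂,χ') + 1`. -/
theorem stmt_16 {X V C : Type} [Fintype V] [DecidableEq C] (T₂ : XTree X V) (χ : X → C)
    (A B : C) (hAB : A ≠ B) (u v : V) (huv : T₂.g.Adj u v)
    (hA : ∀ x, χ x = A → (T₂.g.deleteEdges {s(u, v)}).Reachable (T₂.leaf x) u)
    (hB : ∀ x, χ x = B → (T₂.g.deleteEdges {s(u, v)}).Reachable (T₂.leaf x) v)
    (ω' : V → C) (hω' : IsExtension T₂ (relabel χ A B) ω') :
    IsExtension T₂ χ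
      (fun w => if (T₂.g.deleteEdges {s(u, v)}).Reachable w u ∧ ω' w = B then A else ω' w) ∧
    (mutationEdges T₂.g
        (fun w => if (T₂.g.deleteEdges {s(u, v)}).Reachable w u ∧ ω' w = B then A else ω' w)).ncard
      ≤ (mutationEdges T₂.g ω').ncard + 1 ∧
    score T₂ χ ≤ score T₂ (relabel χ A B) + 1 := by
  obtain ⟨hext, hcard⟩ := stmt_16_aux T₂ χ A B hAB u v huv hA hB ω' hω'
  refine ⟨hext, hcard, ?_⟩
  have hne : {n | ∃ ω : V → C, IsExtension T₂ (relabel χ A B) ω ∧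
      (mutationEdges T₂.g ω).ncard = n}.Nonempty :=
    ⟨(mutationEdges T₂.g ω').ncard, ω', hω', rfl⟩
  obtain ⟨ω₂, hω₂ext, hω₂card⟩ := Nat.sInf_mem hne
  obtain ⟨h2ext, h2card⟩ := stmt_16_aux T₂ χ A B hAB u v huv hA hB ω₂ hω₂ext
  calc score T₂ χ ≤ (mutationEdges T₂.g
        (fun w => if (T₂.g.deleteEdges {s(u, v)}).Reachable w u ∧ ω₂ w = B then A
          else ω₂ w)).ncard := Nat.sInf_le ⟨_, h2ext, rfl⟩
    _ ≤ (mutationEdges T₂.g ω₂).ncard + 1 := h2card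
    _ = score T₂ (relabel χ A B) + 1 := by rw [hω₂card]; rfl
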